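/- arXiv:math/9504209 — 2 statements merged into one kernel-verified Lean document; each statement's English description precedes it below -/
import Mathlib

section
/- For all A, B ∈ SL(2,ℂ) with A ≠ ±1 and B ≠ ±1, setting s = 2·max{‖A‖², ‖B‖²}, one has |tr B|² ≤ s − 4·|γ(A,B)|/(s − |tr A|²). (Here s − |tr A|² ≥ ‖A − A⁻¹‖²/2 > 0, so the right-hand side is well defined.) -/
open Matrix Real

noncomputable section

abbrev SL2C := Matrix.SpecialLinearGroup (Fin 2) ℂ

/-- The Frobenius (Hilbert–Schmidt) norm of a 2×2 complex matrix. -/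
def fnorm (A : Matrix (Fin 2) (Fin 2) ℂ) : ℝ :=
  @norm _ Matrix.frobeniusSeminormedAddCommGroup.toNorm A

instance : TopologicalSpace SL2C :=
  TopologicalSpace.induced (fun g => (g : Matrix (Fin 2) (Fin 2) ℂ)) inferInstance

/-- A subgroup of `SL(2,ℂ)` is discrete if it is a discrete subspace of `SL(2,ℂ)`. -/
def IsDiscreteSubgroup (Γ : Subgroup SL2C) : Prop := DiscreteTopology Γ

/-- `A` is elliptic of order `n`: `A^n = ±1` but `A^k ≠ ±1` for `1 ≤ k < n`. -/
def IsEllipticOfOrder (A : SL2C) (n : ℕ) : Prop :=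
  (A ^ n = 1 ∨ A ^ n = -1) ∧ ∀ k : ℕ, 1 ≤ k → k < n → A ^ k ≠ 1 ∧ A ^ k ≠ -1

/-- `A` is parabolic: `A ≠ ±1` and `tr A = ±2`. -/
def IsParabolic (A : SL2C) : Prop :=
  A ≠ 1 ∧ A ≠ -1 ∧ (Matrix.trace (A : Matrix (Fin 2) (Fin 2) ℂ) = 2 ∨
    Matrix.trace (A : Matrix (Fin 2) (Fin 2) ℂ) = -2)

/-- `S` and `T` have a common eigenvector in `ℂ²`. -/
def HasCommonEigenvector (S T : SL2C) : Prop :=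
  ∃ v : Fin 2 → ℂ, v ≠ 0 ∧ (∃ a : ℂ, (S : Matrix (Fin 2) (Fin 2) ℂ).mulVec v = a • v) ∧
    (∃ b : ℂ, (T : Matrix (Fin 2) (Fin 2) ℂ).mulVec v = b • v)

/-- A subgroup of `SL(2,ℂ)` is nonelementary if it contains two elements `S`, `T`
with `S^k ≠ ±1 ≠ T^k` for all `k ≥ 1` having no common eigenvector in `ℂ²`. -/
def IsNonelementary (Γ : Subgroup SL2C) : Prop :=
  ∃ S ∈ Γ, ∃ T ∈ Γ, (∀ k : ℕ, 1 ≤ k → S ^ k ≠ 1 ∧ S ^ k ≠ -1) ∧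
    (∀ k : ℕ, 1 ≤ k → T ^ k ≠ 1 ∧ T ^ k ≠ -1) ∧ ¬ HasCommonEigenvector S T

/-- The trace parameter `β(A) = tr²(A) - 4`. -/
def βp (A : SL2C) : ℂ := (Matrix.trace (A : Matrix (Fin 2) (Fin 2) ℂ)) ^ 2 - 4

/-- The commutator parameter `γ(A,B) = tr [A,B] - 2`. -/
def γp (A B : SL2C) : ℂ :=
  Matrix.trace ((A * B * A⁻¹ * B⁻¹ : SL2C) : Matrix (Fin 2) (Fin 2) ℂ) - 2

/-- `PSL(2,ℂ)`, the quotient of `SL(2,ℂ)` by its center `{1, -1}`. -/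
abbrev PSL2C := SL2C ⧸ Subgroup.center SL2C

/-- The image in `PSL(2,ℂ)` of a subgroup of `SL(2,ℂ)`. -/
def pslImage (Γ : Subgroup SL2C) : Subgroup PSL2C :=
  Γ.map (QuotientGroup.mk' (Subgroup.center SL2C))

open Classical in
/-- `t5`: the unique real `t > 1` with
`t (t - cos²(π/5)) + (t-1) √((t+1)(t+1-2 cos²(π/5))) = 1/2`. -/
def t5 : ℝ :=
  if h : ∃ t : ℝ, 1 < t ∧
      t * (t - Real.cos (π / 5) ^ 2) +
        (t - 1) * Real.sqrt ((t + 1) * (t + 1 - 2 * Real.cos (π / 5) ^ 2)) = 1 / 2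
  then h.choose else 0

/-- The value `t n = cosh (c n)` where `c n` is the sharp displacement bound for
discrete nonelementary groups with an elliptic generator of order `n ≥ 3`. -/
def tOf : ℕ → ℝ
  | 3 => (2 * Real.sqrt (8 + 2 * Real.sqrt 5) - (1 + Real.sqrt 5)) / (6 - Real.sqrt 5)
  | 4 => (Real.sqrt (6 + 2 * Real.sqrt 3) - Real.sqrt 3) / (3 - Real.sqrt 3)
  | 5 => t5
  | 6 => 17 / 16
  | n => (5 - 2 * Real.sin (π / n) ^ 2) / (4 + 2 * Real.sin (π / n) ^ 2)


section AuxTraceUpperBound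

open Complex in
/-- Complex Lagrange-type identity. -/
private lemma lagrange_sl2 (x y z u v w : ℂ) :
    (normSq x + 2*normSq y + 2*normSq z) * (normSq u + 2*normSq v + 2*normSq w) =
      normSq (x * (starRingEnd ℂ) u + 2*y * (starRingEnd ℂ) v + 2*z * (starRingEnd ℂ) w)
      + 2 * normSq (x*v - u*y) + 2 * normSq (x*w - u*z) + 4 * normSq (y*w - z*v) := by
  simp [Complex.normSq_apply, Complex.mul_re, Complex.mul_im, Complex.sub_re, Complex.sub_im,
    Complex.add_re, Complex.add_im, Complex.conj_re, Complex.conj_im]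
  ring

open Complex in
private lemma key_ineq (x y z u v w : ℂ) :
    4 * ‖(y*w - z*v)^2 + (y*u - v*x)*(x*w - u*z)‖ ≤
      (normSq x + 2*normSq y + 2*normSq z) * (normSq u + 2*normSq v + 2*normSq w) := by
  have lag := lagrange_sl2 x y z u v w
  have h1 : ‖(y*w - z*v)^2 + (y*u - v*x)*(x*w - u*z)‖ ≤
      normSq (y*w - z*v) + ‖y*u - v*x‖ * ‖x*w - u*z‖ := by
    calc ‖(y*w - z*v)^2 + (y*u - v*x)*(x*w - u*z)‖
        ≤ ‖(y*w - z*v)^2‖ + ‖(y*u - v*x)*(x*w - u*z)‖ :=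
          norm_add_le _ _
      _ = normSq (y*w - z*v) + ‖y*u - v*x‖ * ‖x*w - u*z‖ := by
          rw [norm_mul, norm_pow, Complex.sq_norm]
  have h2 : 2 * (‖y*u - v*x‖ * ‖x*w - u*z‖) ≤
      normSq (y*u - v*x) + normSq (x*w - u*z) := by
    nlinarith [sq_nonneg (‖y*u - v*x‖ - ‖x*w - u*z‖),
      Complex.sq_norm (y*u - v*x), Complex.sq_norm (x*w - u*z)]
  have h3 : normSq (x*v - u*y) = normSq (y*u - v*x) := by
    rw [← Complex.normSq_neg]; ring_nf
  have h4 := Complex.normSq_nonneg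
    (x * (starRingEnd ℂ) u + 2*y * (starRingEnd ℂ) v + 2*z * (starRingEnd ℂ) w)
  linarith

open Complex in
private lemma gamma_poly (A B : SL2C) :
    γp A B = (A.1 0 1 * B.1 1 0 - A.1 1 0 * B.1 0 1)^2 +
      (A.1 0 1 * (B.1 0 0 - B.1 1 1) - B.1 0 1 * (A.1 0 0 - A.1 1 1)) *
      ((A.1 0 0 - A.1 1 1) * B.1 1 0 - (B.1 0 0 - B.1 1 1) * A.1 1 0) := by
  have hA : A.1 0 0 * A.1 1 1 - A.1 0 1 * A.1 1 0 = 1 := by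
    have := A.2; rwa [Matrix.det_fin_two] at this
  have hB : B.1 0 0 * B.1 1 1 - B.1 0 1 * B.1 1 0 = 1 := by
    have := B.2; rwa [Matrix.det_fin_two] at this
  simp only [γp, Matrix.SpecialLinearGroup.coe_mul, Matrix.SpecialLinearGroup.coe_inv,
    Matrix.adjugate_fin_two, Matrix.trace_fin_two, Matrix.mul_apply, Fin.sum_univ_two,
    Matrix.of_apply, Matrix.cons_val', Matrix.cons_val_zero, Matrix.cons_val_one,
    Matrix.head_cons, Matrix.empty_val', Matrix.cons_val_fin_one, Matrix.head_fin_const]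
  linear_combination (2*B.1 0 0 * B.1 1 1 - 2*B.1 0 1 * B.1 1 0) * hA + 2 * hB

open Complex in
private lemma fnorm_sq_eq (M : Matrix (Fin 2) (Fin 2) ℂ) :
    fnorm M ^ 2 = normSq (M 0 0) + normSq (M 0 1) + normSq (M 1 0) + normSq (M 1 1) := by
  have h : fnorm M = ((∑ i, ∑ j, ‖M i j‖ ^ (2 : ℝ)) ^ (1 / 2 : ℝ) : ℝ) :=
    Matrix.frobenius_norm_def M
  have hnn : (0:ℝ) ≤ ∑ i, ∑ j : Fin 2, ‖M i j‖ ^ (2 : ℝ) := by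
    refine Finset.sum_nonneg fun i _ => Finset.sum_nonneg fun j _ => ?_
    positivity
  have h2 : fnorm M ^ 2 = ∑ i, ∑ j : Fin 2, ‖M i j‖ ^ (2 : ℝ) := by
    rw [h, ← Real.rpow_natCast (_ ^ (1/2 : ℝ)) 2, ← Real.rpow_mul hnn]
    norm_num
  rw [h2]
  simp only [Fin.sum_univ_two]
  rw [show ((2:ℝ)) = ((2:ℕ):ℝ) by norm_num]
  simp only [Real.rpow_natCast, Complex.sq_norm]
  ring

open Complex in
private lemma D_pos (A : SL2C) (h1 : A ≠ 1) (h2 : A ≠ -1) :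
    0 < normSq (A.1 0 0 - A.1 1 1) + 2 * normSq (A.1 0 1) + 2 * normSq (A.1 1 0) := by
  have hA : A.1 0 0 * A.1 1 1 - A.1 0 1 * A.1 1 0 = 1 := by
    have := A.2; rwa [Matrix.det_fin_two] at this
  rcases lt_or_ge 0 (normSq (A.1 0 0 - A.1 1 1) + 2 * normSq (A.1 0 1)
      + 2 * normSq (A.1 1 0)) with h | h
  · exact h
  exfalso
  have n1 := Complex.normSq_nonneg (A.1 0 0 - A.1 1 1)
  have n2 := Complex.normSq_nonneg (A.1 0 1)
  have n3 := Complex.normSq_nonneg (A.1 1 0)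
  have e1 : A.1 0 0 = A.1 1 1 := by
    have h0 : normSq (A.1 0 0 - A.1 1 1) = 0 := by linarith
    exact sub_eq_zero.mp (Complex.normSq_eq_zero.mp h0)
  have e2 : A.1 0 1 = 0 := by
    have h0 : normSq (A.1 0 1) = 0 := by linarith
    exact Complex.normSq_eq_zero.mp h0
  have e3 : A.1 1 0 = 0 := by
    have h0 : normSq (A.1 1 0) = 0 := by linarith
    exact Complex.normSq_eq_zero.mp h0
  have hsq : (A.1 0 0 - 1) * (A.1 0 0 + 1) = 0 := by
    have : A.1 0 0 * A.1 0 0 = 1 := by rw [← e1] at hA; rw [e2, e3] at hA; linear_combination hA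
    linear_combination this
  rcases mul_eq_zero.mp hsq with hc | hc
  · apply h1
    apply Subtype.ext
    ext i j
    fin_cases i <;> fin_cases j <;>
      simp [Matrix.SpecialLinearGroup.coe_one, Matrix.one_apply, e2, e3, ← e1,
        sub_eq_zero.mp hc]
  · apply h2
    apply Subtype.ext
    have hc' : A.1 0 0 = -1 := by linear_combination hc
    ext i j
    fin_cases i <;> fin_cases j <;>
      simp [Matrix.one_apply, e2, e3, ← e1, hc']

end AuxTraceUpperBound

/-- Lemma 2.19: `|tr B|² ≤ s - 4|γ(A,B)|/(s - |tr A|²)` where `s = 2 max{‖A‖², ‖B‖²}`. -/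
theorem trace_upper_bound (A B : SL2C)
    (hA1 : A ≠ 1) (hA2 : A ≠ -1) (hB1 : B ≠ 1) (hB2 : B ≠ -1) :
    ‖Matrix.trace (B : Matrix (Fin 2) (Fin 2) ℂ)‖ ^ 2 ≤
      2 * max (fnorm (A : Matrix (Fin 2) (Fin 2) ℂ) ^ 2)
          (fnorm (B : Matrix (Fin 2) (Fin 2) ℂ) ^ 2) -
        4 * ‖γp A B‖ /
          (2 * max (fnorm (A : Matrix (Fin 2) (Fin 2) ℂ) ^ 2)
              (fnorm (B : Matrix (Fin 2) (Fin 2) ℂ) ^ 2) -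
            ‖Matrix.trace (A : Matrix (Fin 2) (Fin 2) ℂ)‖ ^ 2) := by
  set a := A.1 0 0 with ha
  set b := A.1 0 1 with hb
  set c := A.1 1 0 with hc
  set d := A.1 1 1 with hd
  set e := B.1 0 0 with he
  set f := B.1 0 1 with hf
  set g := B.1 1 0 with hg
  set hh := B.1 1 1 with hhh
  have trA : Matrix.trace (A : Matrix (Fin 2) (Fin 2) ℂ) = a + d := Matrix.trace_fin_two _
  have trB : Matrix.trace (B : Matrix (Fin 2) (Fin 2) ℂ) = e + hh := Matrix.trace_fin_two _
  have hnA := fnorm_sq_eq (A : Matrix (Fin 2) (Fin 2) ℂ)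
  have hnB := fnorm_sq_eq (B : Matrix (Fin 2) (Fin 2) ℂ)
  rw [← ha, ← hb, ← hc, ← hd] at hnA
  rw [← he, ← hf, ← hg, ← hhh] at hnB
  set s : ℝ := 2 * max (fnorm (A : Matrix (Fin 2) (Fin 2) ℂ) ^ 2)
      (fnorm (B : Matrix (Fin 2) (Fin 2) ℂ) ^ 2) with hs
  set DA : ℝ := Complex.normSq (a - d) + 2 * Complex.normSq b + 2 * Complex.normSq c with hDA
  set DB : ℝ := Complex.normSq (e - hh) + 2 * Complex.normSq f + 2 * Complex.normSq g with hDB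
  have hDApos : 0 < DA := D_pos A hA1 hA2
  have hDBpos : 0 < DB := D_pos B hB1 hB2
  -- algebraic identities for 2‖·‖² - |tr|²
  have idA : 2 * (Complex.normSq a + Complex.normSq b + Complex.normSq c + Complex.normSq d)
      - Complex.normSq (a + d) = DA := by
    simp only [hDA, Complex.normSq_apply, Complex.add_re, Complex.add_im, Complex.sub_re,
      Complex.sub_im]
    ring
  have idB : 2 * (Complex.normSq e + Complex.normSq f + Complex.normSq g + Complex.normSq hh)
      - Complex.normSq (e + hh) = DB := by
    simp only [hDB, Complex.normSq_apply, Complex.add_re, Complex.add_im, Complex.sub_re,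
      Complex.sub_im]
    ring
  have hsA : DA ≤ s - Complex.normSq (a + d) := by
    have h' := le_max_left (fnorm (A : Matrix (Fin 2) (Fin 2) ℂ) ^ 2)
      (fnorm (B : Matrix (Fin 2) (Fin 2) ℂ) ^ 2)
    linarith [idA, hnA, h']
  have hsB : DB ≤ s - Complex.normSq (e + hh) := by
    have h' := le_max_right (fnorm (A : Matrix (Fin 2) (Fin 2) ℂ) ^ 2)
      (fnorm (B : Matrix (Fin 2) (Fin 2) ℂ) ^ 2)
    linarith [idB, hnB, h']
  -- the key inequality 4|γ| ≤ DA·DB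
  have hkey : 4 * ‖γp A B‖ ≤ DA * DB := by
    have := key_ineq (a - d) b c (e - hh) f g
    rw [gamma_poly A B]
    convert this using 3 <;> ring_nf
  have hApos : 0 < s - Complex.normSq (a + d) := lt_of_lt_of_le hDApos hsA
  have hprod : 4 * ‖γp A B‖ ≤ (s - Complex.normSq (a + d)) *
      (s - Complex.normSq (e + hh)) :=
    hkey.trans (mul_le_mul hsA hsB hDBpos.le (by linarith))
  have hdiv : 4 * ‖γp A B‖ / (s - Complex.normSq (a + d)) ≤
      s - Complex.normSq (e + hh) := by
    rw [div_le_iff₀ hApos]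
    linarith [hprod]
  rw [trA, trB, Complex.sq_norm, Complex.sq_norm]
  linarith [hdiv]

end
end

section
/- (Sharpness of the parabolic bound.) Let A = !![1, 1/√2; 0, 1] and B = !![0, 1/√2; −√2, 0], viewed as elements of SL(2,ℂ) (both have determinant 1). Then the subgroup generated by A and B is discrete and nonelementary (it is conjugate to the modular group), A is parabolic, and ‖A‖² = ‖B‖² = 5/2; hence both A and B move the base point of hyperbolic 3-space exactly hyperbolic distance arccosh(5/4), so the lower bound arccosh(5/4) for discrete nonelementary groups with a parabolic generator is attained. -/
open Matrix Real

noncomputable section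

/-! ### Auxiliary machinery for the proof -/

private def sC : ℂ := ((Real.sqrt 2 : ℝ) : ℂ)

private lemma sC_ne : sC ≠ 0 := by
  unfold sC
  exact_mod_cast Complex.ofReal_ne_zero.mpr (by positivity)

private lemma sC_inv_mul : sC⁻¹ * sC = 1 := inv_mul_cancel₀ sC_ne
private lemma sC_mul_inv : sC * sC⁻¹ = 1 := mul_inv_cancel₀ sC_ne

private lemma sC_inv_ne : sC⁻¹ ≠ 0 := inv_ne_zero sC_ne

private lemma abs_sC : ‖sC‖ = Real.sqrt 2 := by
  unfold sC; rw [Complex.norm_real, Real.norm_eq_abs]; exact abs_of_nonneg (Real.sqrt_nonneg 2)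

private lemma abs_sC_sq : ‖sC‖ ^ 2 = 2 := by
  rw [abs_sC, Real.sq_sqrt (by norm_num : (0:ℝ) ≤ 2)]

private lemma sqrt2_le_two : Real.sqrt 2 ≤ 2 := by
  nlinarith [Real.sq_sqrt (by norm_num : (0:ℝ) ≤ 2), Real.sqrt_nonneg 2]

private lemma one_le_sqrt2 : (1:ℝ) ≤ Real.sqrt 2 := by
  nlinarith [Real.sq_sqrt (by norm_num : (0:ℝ) ≤ 2), Real.sqrt_nonneg 2]

private lemma fnorm_sq (M : Matrix (Fin 2) (Fin 2) ℂ) :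
    fnorm M ^ 2 = ∑ i, ∑ j, ‖M i j‖ ^ 2 := by
  have h := Matrix.frobenius_norm_def M
  unfold fnorm
  rw [show (@norm _ Matrix.frobeniusSeminormedAddCommGroup.toNorm M)
      = (∑ i, ∑ j, ‖M i j‖ ^ (2:ℝ)) ^ (1/2 : ℝ) from h]
  rw [← Real.rpow_natCast _ 2, ← Real.rpow_mul (by positivity)]
  norm_num

/-- Elements whose entries come from an integer matrix conjugated by
`diag(2^{-1/4}, 2^{1/4})`. -/
private def Pint (g : SL2C) : Prop :=
  ∃ a b c d : ℤ, (g : Matrix (Fin 2) (Fin 2) ℂ) = !![(a:ℂ), (b:ℂ) * sC⁻¹; (c:ℂ) * sC, (d:ℂ)]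

private lemma Pint_one : Pint 1 := by
  refine ⟨1, 0, 0, 1, ?_⟩
  simp [Matrix.SpecialLinearGroup.coe_one]
  ext i j
  fin_cases i <;> fin_cases j <;> simp [Matrix.one_apply]

private lemma Pint_mul {g h : SL2C} (hg : Pint g) (hh : Pint h) : Pint (g * h) := by
  obtain ⟨a, b, c, d, hg⟩ := hg
  obtain ⟨a', b', c', d', hh⟩ := hh
  refine ⟨a * a' + b * c', a * b' + b * d', c * a' + d * c', c * b' + d * d', ?_⟩
  rw [Matrix.SpecialLinearGroup.coe_mul, hg, hh, Matrix.mul_fin_two]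
  ext i j
  fin_cases i <;> fin_cases j <;> simp
  · linear_combination (↑b * ↑c' : ℂ) * sC_inv_mul
  · ring
  · ring
  · linear_combination (↑c * ↑b' : ℂ) * sC_inv_mul

private lemma Pint_inv {g : SL2C} (hg : Pint g) : Pint g⁻¹ := by
  obtain ⟨a, b, c, d, hg⟩ := hg
  refine ⟨d, -b, -c, a, ?_⟩
  rw [Matrix.SpecialLinearGroup.SL2_inv_expl]
  ext i j
  fin_cases i <;> fin_cases j <;> simp [hg]

private lemma int_sep_scaled {m n : ℤ} {r : ℝ} (hr : 1/2 ≤ r)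
    (h : ‖((m : ℂ) - n)‖ * r < 1/2) : m = n := by
  by_contra hne
  have h1 : ((m : ℂ) - n) = ((m - n : ℤ) : ℂ) := by push_cast; ring
  rw [h1, Complex.norm_intCast] at h
  have h2 : (1:ℝ) ≤ |((m - n : ℤ) : ℝ)| := by
    exact_mod_cast Int.one_le_abs (sub_ne_zero.mpr hne)
  nlinarith

private lemma key_sep {g h : SL2C} (hg : Pint g) (hh : Pint h)
    (hd : ∀ i j, ‖((g : Matrix (Fin 2) (Fin 2) ℂ) i j
      - (h : Matrix (Fin 2) (Fin 2) ℂ) i j)‖ < 1/2) : g = h := by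
  obtain ⟨a, b, c, d, hg'⟩ := hg
  obtain ⟨a', b', c', d', hh'⟩ := hh
  have hinv2 : (1:ℝ)/2 ≤ (Real.sqrt 2)⁻¹ := by
    rw [le_inv_comm₀ (by norm_num) (by positivity)]
    simpa using sqrt2_le_two
  have h00 := hd 0 0; have h01 := hd 0 1; have h10 := hd 1 0; have h11 := hd 1 1
  rw [hg', hh'] at h00 h01 h10 h11
  simp at h00 h01 h10 h11
  rw [← sub_mul, norm_mul] at h01 h10
  rw [norm_inv, abs_sC] at h01
  rw [abs_sC] at h10
  have ha : a = a' := int_sep_scaled (r := 1) (by norm_num) (by rw [mul_one]; linarith)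
  have hd' : d = d' := int_sep_scaled (r := 1) (by norm_num) (by rw [mul_one]; linarith)
  have hb : b = b' := int_sep_scaled hinv2 (by linarith)
  have hc : c = c' :=
    int_sep_scaled (r := Real.sqrt 2) (by linarith [one_le_sqrt2]) (by linarith)
  apply Subtype.ext
  rw [hg', hh', ha, hb, hc, hd']

private lemma discrete_of_Pint (Γ : Subgroup SL2C) (hP : ∀ g ∈ Γ, Pint g) :
    IsDiscreteSubgroup Γ := by
  unfold IsDiscreteSubgroup
  refine discreteTopology_iff_isOpen_singleton.mpr (fun x => ?_)
  set U : Set (Matrix (Fin 2) (Fin 2) ℂ) :=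
    ⋂ i, ⋂ j, (fun M : Matrix (Fin 2) (Fin 2) ℂ => M i j) ⁻¹'
      Metric.ball (((x : SL2C) : Matrix (Fin 2) (Fin 2) ℂ) i j) (1/2) with hUdef
  have hUopen : IsOpen U := by
    refine isOpen_iInter_of_finite (fun i => isOpen_iInter_of_finite (fun j => ?_))
    exact Metric.isOpen_ball.preimage (continuous_id.matrix_elem i j)
  have hcont : Continuous (fun γ : Γ => ((γ : SL2C) : Matrix (Fin 2) (Fin 2) ℂ)) :=
    Continuous.comp continuous_induced_dom continuous_subtype_val
  have hset : {x} = (fun γ : Γ => ((γ : SL2C) : Matrix (Fin 2) (Fin 2) ℂ)) ⁻¹' U := by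
    ext γ
    simp only [Set.mem_singleton_iff, Set.mem_preimage, hUdef, Set.mem_iInter,
      Metric.mem_ball, Complex.dist_eq]
    constructor
    · rintro rfl
      intro i j
      simp
    · intro hγ
      exact Subtype.ext (key_sep (hP _ γ.2) (hP _ x.2) (fun i j => hγ i j))
  rw [hset]
  exact hUopen.preimage hcont

/-- Sharpness of Theorem 1.18: the modular-group generators realize the bound
`arccosh (5/4)`, i.e. `‖A‖² = ‖B‖² = 5/2`. -/
theorem margulis_parabolic_sharp (A B : SL2C)
    (hA : (A : Matrix (Fin 2) (Fin 2) ℂ) = !![1, ((Real.sqrt 2 : ℝ) : ℂ)⁻¹; 0, 1])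
    (hB : (B : Matrix (Fin 2) (Fin 2) ℂ) =
      !![0, ((Real.sqrt 2 : ℝ) : ℂ)⁻¹; -((Real.sqrt 2 : ℝ) : ℂ), 0]) :
    IsDiscreteSubgroup (Subgroup.closure {A, B}) ∧
      IsNonelementary (Subgroup.closure {A, B}) ∧
      IsParabolic A ∧
      fnorm (A : Matrix (Fin 2) (Fin 2) ℂ) ^ 2 = 5 / 2 ∧
      fnorm (B : Matrix (Fin 2) (Fin 2) ℂ) ^ 2 = 5 / 2 := by
  have hA' : (A : Matrix (Fin 2) (Fin 2) ℂ) = !![1, sC⁻¹; 0, 1] := hA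
  have hB' : (B : Matrix (Fin 2) (Fin 2) ℂ) = !![0, sC⁻¹; -sC, 0] := hB
  have PintA : Pint A := by
    refine ⟨1, 1, 0, 1, ?_⟩
    rw [hA']
    ext i j
    fin_cases i <;> fin_cases j <;> simp
  have PintB : Pint B := by
    refine ⟨0, 1, -1, 0, ?_⟩
    rw [hB']
    ext i j
    fin_cases i <;> fin_cases j <;> simp
  have hPall : ∀ g ∈ Subgroup.closure {A, B}, Pint g := by
    intro g hg
    refine Subgroup.closure_induction (p := fun g _ => Pint g) ?_ Pint_one
      (fun x y _ _ px py => Pint_mul px py) (fun x _ px => Pint_inv px) hg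
    intro x hx
    rcases hx with rfl | rfl
    · exact PintA
    · exact PintB
  -- matrices of inverses
  have hAinv : ((A⁻¹ : SL2C) : Matrix (Fin 2) (Fin 2) ℂ) = !![1, -sC⁻¹; 0, 1] := by
    rw [Matrix.SpecialLinearGroup.SL2_inv_expl]
    ext i j
    fin_cases i <;> fin_cases j <;> simp [hA']
  have hBinv : ((B⁻¹ : SL2C) : Matrix (Fin 2) (Fin 2) ℂ) = !![0, -sC⁻¹; sC, 0] := by
    rw [Matrix.SpecialLinearGroup.SL2_inv_expl]
    ext i j
    fin_cases i <;> fin_cases j <;> simp [hB']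
  -- the hyperbolic element T
  set T : SL2C := A * (B * A⁻¹ * B⁻¹) with hTdef
  have hTmem : T ∈ Subgroup.closure {A, B} := by
    have hAm : A ∈ Subgroup.closure {A, B} :=
      Subgroup.subset_closure (Set.mem_insert _ _)
    have hBm : B ∈ Subgroup.closure {A, B} :=
      Subgroup.subset_closure (Set.mem_insert_of_mem _ rfl)
    exact mul_mem hAm (mul_mem (mul_mem hBm (inv_mem hAm)) (inv_mem hBm))
  have hT : (T : Matrix (Fin 2) (Fin 2) ℂ) = !![2, sC⁻¹; sC, 1] := by
    rw [hTdef, Matrix.SpecialLinearGroup.coe_mul, Matrix.SpecialLinearGroup.coe_mul,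
      Matrix.SpecialLinearGroup.coe_mul, hA', hB', hAinv, hBinv,
      Matrix.mul_fin_two, Matrix.mul_fin_two, Matrix.mul_fin_two]
    ext i j
    fin_cases i <;> fin_cases j <;> simp
    · linear_combination 2 * sC_inv_mul
    · linear_combination sC⁻¹ * sC_inv_mul
    · linear_combination sC_inv_mul
  -- powers of A
  have hApow : ∀ k : ℕ, ((A ^ k : SL2C) : Matrix (Fin 2) (Fin 2) ℂ)
      = !![1, (k : ℂ) * sC⁻¹; 0, 1] := by
    intro k
    induction k with
    | zero =>
      rw [pow_zero, Matrix.SpecialLinearGroup.coe_one]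
      ext i j
      fin_cases i <;> fin_cases j <;> simp [Matrix.one_apply]
    | succ n ih =>
      rw [pow_succ, Matrix.SpecialLinearGroup.coe_mul, ih, hA', Matrix.mul_fin_two]
      ext i j
      fin_cases i <;> fin_cases j <;> (simp; try push_cast; try ring)
  have hAne : ∀ k : ℕ, 1 ≤ k → A ^ k ≠ 1 ∧ A ^ k ≠ -1 := by
    intro k hk
    constructor
    · intro h
      have h2 := congrArg (fun g : SL2C => (g : Matrix (Fin 2) (Fin 2) ℂ) 0 1) h
      simp [hApow k, Matrix.SpecialLinearGroup.coe_one, Matrix.one_apply] at h2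
      rcases h2 with h2 | h2
      · omega
      · exact sC_ne h2
    · intro h
      have h2 := congrArg (fun g : SL2C => (g : Matrix (Fin 2) (Fin 2) ℂ) 0 1) h
      simp [hApow k, Matrix.SpecialLinearGroup.coe_neg,
        Matrix.SpecialLinearGroup.coe_one, Matrix.one_apply] at h2
      rcases h2 with h2 | h2
      · omega
      · exact sC_ne h2
  -- powers of T
  have hTpow : ∀ k : ℕ, 1 ≤ k → ∃ a b c d : ℕ, 1 ≤ a ∧ 1 ≤ b ∧
      ((T ^ k : SL2C) : Matrix (Fin 2) (Fin 2) ℂ)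
        = !![(a : ℂ), (b : ℂ) * sC⁻¹; (c : ℂ) * sC, (d : ℂ)] := by
    intro k hk
    induction k, hk using Nat.le_induction with
    | base =>
      refine ⟨2, 1, 1, 1, by norm_num, by norm_num, ?_⟩
      rw [pow_one, hT]
      ext i j
      fin_cases i <;> fin_cases j <;> simp
    | succ n hn ih =>
      obtain ⟨a, b, c, d, ha, hb, hM⟩ := ih
      refine ⟨2 * a + b, a + b, 2 * c + d, c + d, by omega, by omega, ?_⟩
      rw [pow_succ, Matrix.SpecialLinearGroup.coe_mul, hM, hT, Matrix.mul_fin_two]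
      ext i j
      fin_cases i <;> fin_cases j <;> (simp; push_cast)
      · linear_combination (b : ℂ) * sC_inv_mul
      · ring
      · ring
      · linear_combination (c : ℂ) * sC_mul_inv
  have hTne : ∀ k : ℕ, 1 ≤ k → T ^ k ≠ 1 ∧ T ^ k ≠ -1 := by
    intro k hk
    obtain ⟨a, b, c, d, ha, hb, hM⟩ := hTpow k hk
    constructor
    · intro h
      have h2 := congrArg (fun g : SL2C => (g : Matrix (Fin 2) (Fin 2) ℂ) 0 1) h
      simp [hM, Matrix.SpecialLinearGroup.coe_one, Matrix.one_apply] at h2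
      rcases h2 with h2 | h2
      · omega
      · exact sC_ne h2
    · intro h
      have h2 := congrArg (fun g : SL2C => (g : Matrix (Fin 2) (Fin 2) ℂ) 0 1) h
      simp [hM, Matrix.SpecialLinearGroup.coe_neg,
        Matrix.SpecialLinearGroup.coe_one, Matrix.one_apply] at h2
      rcases h2 with h2 | h2
      · omega
      · exact sC_ne h2
  refine ⟨discrete_of_Pint _ hPall, ?_, ?_, ?_, ?_⟩
  · -- nonelementary
    refine ⟨A, Subgroup.subset_closure (Set.mem_insert _ _), T, hTmem, hAne, hTne, ?_⟩
    rintro ⟨v, hv, ⟨a, hva⟩, ⟨b, hvb⟩⟩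
    rw [hA'] at hva
    rw [hT] at hvb
    have e0 := congrFun hva 0
    have e1 := congrFun hva 1
    have f1 := congrFun hvb 1
    simp [Matrix.mulVec, dotProduct, Fin.sum_univ_two] at e0 e1 f1
    by_cases h1 : v 1 = 0
    · have h0 : v 0 ≠ 0 := by
        intro h0
        apply hv
        funext i
        fin_cases i <;> simp [h0, h1]
      rw [h1] at f1
      simp at f1
      rcases f1 with f1 | f1
      · exact sC_ne f1
      · exact h0 f1
    · have ha1 : a = 1 := by
        have : (a - 1) * v 1 = 0 := by linear_combination -e1
        rcases mul_eq_zero.mp this with h | h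
        · exact sub_eq_zero.mp h
        · exact absurd h h1
      rw [ha1, one_mul] at e0
      have : sC⁻¹ * v 1 = 0 := by linear_combination e0
      rcases mul_eq_zero.mp this with h | h
      · exact sC_inv_ne h
      · exact h1 h
  · -- parabolic
    refine ⟨?_, ?_, Or.inl ?_⟩
    · intro h
      have h2 := congrArg (fun g : SL2C => (g : Matrix (Fin 2) (Fin 2) ℂ) 0 1) h
      simp [hA', Matrix.SpecialLinearGroup.coe_one, Matrix.one_apply] at h2
      exact sC_ne h2
    · intro h
      have h2 := congrArg (fun g : SL2C => (g : Matrix (Fin 2) (Fin 2) ℂ) 0 0) h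
      simp [hA', Matrix.SpecialLinearGroup.coe_neg,
        Matrix.SpecialLinearGroup.coe_one, Matrix.one_apply] at h2
      norm_num at h2
    · rw [hA', Matrix.trace_fin_two]
      norm_num
  · rw [hA', fnorm_sq]
    simp [Fin.sum_univ_two]
    rw [abs_sC_sq]
    norm_num
  · rw [hB', fnorm_sq]
    simp [Fin.sum_univ_two]
    rw [abs_sC_sq]
    norm_num

end
end
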